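/- Let u : ℝⁿ → ℝ be smooth, let X(x) = (x, Du(x), u(x) − (1/2) x·Du(x)) ∈ ℝ^{2n+1}, and let f(x) = (1/16)(|x|² + |Du(x)|²). Then for every x ∈ ℝⁿ and every j = 1, …, n, ∂f/∂x_j(x) = (1/2) g_{X(x)}(X(x), ∂X/∂x_j(x)); i.e. the intrinsic gradient of f on the Legendrian graph equals one half of the tangential part of the position vector, ∇f = (1/2)X^T. -/

import Mathlib

open Real

/-- `i`-th partial derivative of `u` at `x` (component of the gradient `Du`). -/
noncomputable def pd {n : ℕ} (u : (Fin n → ℝ) → ℝ) (i : Fin n) (x : Fin n → ℝ) : ℝ :=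
  fderiv ℝ u x (Pi.single i 1)

/-- Hessian matrix `D²u(x)`. -/
noncomputable def hess {n : ℕ} (u : (Fin n → ℝ) → ℝ) (x : Fin n → ℝ) :
    Matrix (Fin n) (Fin n) ℝ :=
  Matrix.of fun i j => fderiv ℝ (fun y => fderiv ℝ u y (Pi.single j 1)) x (Pi.single i 1)

/-- The Legendrian angle `θ(x) = ∑ arctan λᵢ(x)`, where `λᵢ(x)` are the eigenvalues
(with multiplicity, i.e. the roots of the characteristic polynomial) of the Hessian. -/
noncomputable def legAngle {n : ℕ} (u : (Fin n → ℝ) → ℝ) (x : Fin n → ℝ) : ℝ :=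
  ((hess u x).charpoly.roots.map Real.arctan).sum

/-- The Legendrian graph map `X(x) = (x, Du(x), u(x) - (1/2) x·Du(x)) ∈ ℝⁿ×ℝⁿ×ℝ`. -/
noncomputable def Xmap {n : ℕ} (u : (Fin n → ℝ) → ℝ) (x : Fin n → ℝ) :
    (Fin n → ℝ) × (Fin n → ℝ) × ℝ :=
  (x, fun i => pd u i x, u x - (1/2) * ∑ i, x i * pd u i x)

/-- The standard contact form on `ℝ^{2n+1}`: at `p = (x, y, z)` acting on `v = (a, b, c)`,
`η_p(v) = (1/2)c - (1/4)∑ᵢ (yᵢ aᵢ - xᵢ bᵢ)`. -/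
noncomputable def eta {n : ℕ} (p v : (Fin n → ℝ) × (Fin n → ℝ) × ℝ) : ℝ :=
  (1/2) * v.2.2 - (1/4) * ∑ i, (p.2.1 i * v.1 i - p.1 i * v.2.1 i)

/-- The associated (contact) Riemannian metric on `ℝ^{2n+1}`:
`g_p(v,w) = (1/4)∑ᵢ (aᵢ a'ᵢ + bᵢ b'ᵢ) + η_p(v) η_p(w)`. -/
noncomputable def cmetric {n : ℕ} (p v w : (Fin n → ℝ) × (Fin n → ℝ) × ℝ) : ℝ :=
  (1/4) * ∑ i, (v.1 i * w.1 i + v.2.1 i * w.2.1 i) + eta p v * eta p w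

/-- The weight function `f(x) = (1/16)(|x|² + |Du(x)|²)`. -/
noncomputable def fwt {n : ℕ} (u : (Fin n → ℝ) → ℝ) (x : Fin n → ℝ) : ℝ :=
  (1/16) * (∑ i, x i ^ 2 + ∑ i, pd u i x ^ 2)

set_option maxHeartbeats 1000000 in
private lemma key_aux {n : ℕ}
    (u : (Fin n → ℝ) → ℝ) (hu : ContDiff ℝ (⊤ : ℕ∞) u) :
    ∀ (x : Fin n → ℝ) (j : Fin n),
      pd (fwt u) j x
        = (1/2) * cmetric (Xmap u x) (Xmap u x) (fderiv ℝ (Xmap u) x (Pi.single j 1)) := by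
  intro x j
  have hud : Differentiable ℝ u := hu.differentiable (by simp)
  have hdu : ContDiff ℝ (⊤ : ℕ∞) (fderiv ℝ u) := (contDiff_infty_iff_fderiv.mp hu).2
  have hpd : ∀ i, Differentiable ℝ (pd u i) := fun i =>
    (hdu.differentiable (by simp)).clm_apply (differentiable_const _)
  have hsum : HasFDerivAt (fun y : Fin n → ℝ => ∑ i, y i * pd u i y)
      (∑ i, ((x i) • fderiv ℝ (pd u i) x
        + (pd u i x) • (ContinuousLinearMap.proj i : (Fin n → ℝ) →L[ℝ] ℝ))) x := by
    apply HasFDerivAt.fun_sum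
    intro i _
    exact ((ContinuousLinearMap.proj i : (Fin n → ℝ) →L[ℝ] ℝ).hasFDerivAt).mul
      ((hpd i x).hasFDerivAt)
  have hX : HasFDerivAt (Xmap u)
      ((ContinuousLinearMap.id ℝ (Fin n → ℝ)).prod
        ((ContinuousLinearMap.pi fun i => fderiv ℝ (pd u i) x).prod
          (fderiv ℝ u x - (1/2 : ℝ) • (∑ i, ((x i) • fderiv ℝ (pd u i) x
            + (pd u i x) • (ContinuousLinearMap.proj i : (Fin n → ℝ) →L[ℝ] ℝ)))))) x := by
    refine HasFDerivAt.prodMk (hasFDerivAt_id x) (HasFDerivAt.prodMk ?_ ?_)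
    · refine hasFDerivAt_pi'' fun i => ?_
      have h : (ContinuousLinearMap.proj i).comp
          (ContinuousLinearMap.pi fun i => fderiv ℝ (pd u i) x) = fderiv ℝ (pd u i) x := by
        ext v; simp
      rw [h]
      exact (hpd i x).hasFDerivAt
    · exact (hud x).hasFDerivAt.sub (hsum.const_mul _)
  have hf : HasFDerivAt (fwt u)
      ((1/16 : ℝ) • ((∑ i, (2 * x i) • (ContinuousLinearMap.proj i : (Fin n → ℝ) →L[ℝ] ℝ))
        + ∑ i, (2 * pd u i x) • fderiv ℝ (pd u i) x)) x := by
    have h1 : HasFDerivAt (fun y : Fin n → ℝ => ∑ i, y i ^ 2)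
        (∑ i, (2 * x i) • (ContinuousLinearMap.proj i : (Fin n → ℝ) →L[ℝ] ℝ)) x := by
      apply HasFDerivAt.fun_sum
      intro i _
      have h := ((ContinuousLinearMap.proj i : (Fin n → ℝ) →L[ℝ] ℝ).hasFDerivAt (x := x)).fun_mul
        ((ContinuousLinearMap.proj i : (Fin n → ℝ) →L[ℝ] ℝ).hasFDerivAt)
      simpa [pow_two, two_mul, add_smul] using h
    have h2 : HasFDerivAt (fun y : Fin n → ℝ => ∑ i, pd u i y ^ 2)
        (∑ i, (2 * pd u i x) • fderiv ℝ (pd u i) x) x := by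
      apply HasFDerivAt.fun_sum
      intro i _
      have h := ((hpd i x).hasFDerivAt).fun_mul ((hpd i x).hasFDerivAt)
      simpa [pow_two, two_mul, add_smul] using h
    exact (h1.add h2).const_mul (1/16 : ℝ)
  have hpdj : fderiv ℝ u x (Pi.single j 1) = pd u j x := rfl
  set H : Fin n → ℝ := fun i => fderiv ℝ (pd u i) x (Pi.single j 1) with hH
  have hsing : ∀ c : Fin n → ℝ, ∑ i, c i * (Pi.single j 1 : Fin n → ℝ) i = c j := by
    intro c
    simp [Pi.single_apply, Finset.sum_ite_eq']
  have LHS : pd (fwt u) j x = (1/16 : ℝ) * (2 * x j + ∑ i, 2 * pd u i x * H i) := by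
    rw [pd, hf.fderiv]
    simp only [ContinuousLinearMap.add_apply, ContinuousLinearMap.smul_apply,
      ContinuousLinearMap.sum_apply, ContinuousLinearMap.proj_apply, smul_eq_mul,
      Pi.single_apply, mul_ite, mul_one, mul_zero, Finset.sum_ite_eq', Finset.mem_univ, if_true]
    rfl
  -- the applied derivative of Xmap
  have hv : fderiv ℝ (Xmap u) x (Pi.single j 1)
      = (Pi.single j 1, fun i => H i,
          pd u j x - (1/2) * ((∑ i, x i * H i) + pd u j x)) := by
    rw [hX.fderiv]
    simp only [ContinuousLinearMap.prod_apply, ContinuousLinearMap.id_apply,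
      ContinuousLinearMap.pi_apply, ContinuousLinearMap.sub_apply,
      ContinuousLinearMap.smul_apply, ContinuousLinearMap.sum_apply,
      ContinuousLinearMap.add_apply, ContinuousLinearMap.proj_apply, smul_eq_mul, hpdj]
    refine Prod.ext rfl (Prod.ext rfl ?_)
    simp only [Finset.sum_add_distrib, hsing fun i => pd u i x]
    rfl
  -- eta of the position vector
  have e1 : eta (Xmap u x) (Xmap u x)
      = (1/2) * (u x - (1/2) * ∑ i, x i * pd u i x) := by
    have hz : ∀ i, pd u i x * x i - x i * pd u i x = 0 := fun i => by ring
    simp [eta, Xmap, hz]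
  -- eta of the tangent vector vanishes
  have e2 : eta (Xmap u x) (fderiv ℝ (Xmap u) x (Pi.single j 1)) = 0 := by
    rw [hv]
    simp only [eta, Xmap, Finset.sum_sub_distrib, hsing fun i => pd u i x]
    ring
  rw [LHS]
  simp only [cmetric, e2, mul_zero, add_zero]
  rw [hv]
  simp only [Xmap, Finset.sum_add_distrib, hsing x]
  have h2s : ∑ i, 2 * pd u i x * H i = 2 * ∑ i, pd u i x * H i := by
    rw [Finset.mul_sum]
    exact Finset.sum_congr rfl fun i _ => by ring
  rw [h2s]
  ring

/-- `∂f/∂x_j = (1/2) g(X, ∂X/∂x_j)`, i.e. the intrinsic gradient of `f`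
on the Legendrian graph is one half of the tangential part of the position vector,
`∇f = (1/2) Xᵀ`. -/
theorem legendrian_graph_gradient_f {n : ℕ}
    (u : (Fin n → ℝ) → ℝ) (hu : ContDiff ℝ (⊤ : ℕ∞) u) :
    ∀ (x : Fin n → ℝ) (j : Fin n),
      pd (fwt u) j x
        = (1/2) * cmetric (Xmap u x) (Xmap u x) (fderiv ℝ (Xmap u) x (Pi.single j 1)) :=
  key_aux u hu
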